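/- arXiv:0805.0433 — 5 statements merged into one kernel-verified Lean document; each statement's English description precedes it below -/
import Mathlib

section
/- Let I ⊆ ℝ be an open interval, a, b ∈ I with a < b, and let f : ℝ → ℝ be twice differentiable on I. If m is a real number with m ≤ f''(x) for all x ∈ [a, b], then f((a + b)/2) + (m/24)·(b − a)² ≤ (1/(b − a)) · ∫_a^b f(x) dx. -/
open Set intervalIntegral

/-- Let `I ⊆ ℝ` be an open interval, `a, b ∈ I` with `a < b`, and let `f : ℝ → ℝ` be twice
differentiable on `I`. If `m ≤ f''(x)` for all `x ∈ [a, b]`, then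
`f((a+b)/2) + (m/24)(b-a)² ≤ (1/(b-a)) ∫_a^b f`. -/
theorem hermite_hadamard_lower_midpoint
    (I : Set ℝ) (hIopen : IsOpen I) (hIinterval : I.OrdConnected)
    (a b : ℝ) (ha : a ∈ I) (hb : b ∈ I) (hab : a < b)
    (f : ℝ → ℝ)
    (hf : ∀ x ∈ I, DifferentiableAt ℝ f x)
    (hf' : ∀ x ∈ I, DifferentiableAt ℝ (deriv f) x)
    (m : ℝ) (hm : ∀ x ∈ Set.Icc a b, m ≤ deriv (deriv f) x) :
    f ((a + b) / 2) + m / 24 * (b - a) ^ 2 ≤ (1 / (b - a)) * ∫ x in a..b, f x := by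
  have hIcc : Icc a b ⊆ I := hIinterval.out ha hb
  set c : ℝ := (a + b) / 2 with hc_def
  have hcmem : c ∈ Icc a b := ⟨by linarith, by linarith⟩
  have hcI : c ∈ I := hIcc hcmem
  set g : ℝ → ℝ := fun x => f x - m / 2 * x ^ 2 with hg_def
  -- g is differentiable on I
  have hgdiff : ∀ x ∈ I, DifferentiableAt ℝ g x := fun x hx =>
    (hf x hx).sub ((differentiableAt_const _).mul (differentiableAt_pow 2))
  -- deriv g = deriv f - m * x on I
  have hderivg : ∀ x ∈ I, deriv g x = deriv f x - m * x := by
    intro x hx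
    rw [hg_def]
    rw [deriv_fun_sub (g := fun y => m / 2 * y ^ 2) (hf x hx) (((differentiableAt_const _).mul (differentiableAt_pow 2)))]
    rw [deriv_const_mul _ (differentiableAt_pow 2)]
    simp [deriv_pow_field]
    ring
  have hIn : ∀ x ∈ I, deriv g =ᶠ[nhds x] fun y => deriv f y - m * y := by
    intro x hx
    filter_upwards [hIopen.mem_nhds hx] with y hy using hderivg y hy
  -- second derivative of g on I
  have hderiv2g : ∀ x ∈ I, deriv (deriv g) x = deriv (deriv f) x - m := by
    intro x hx
    rw [Filter.EventuallyEq.deriv_eq (hIn x hx)]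
    rw [deriv_fun_sub (g := fun y => m * y) (hf' x hx) ((differentiableAt_const m).mul differentiableAt_fun_id)]
    rw [deriv_const_mul _ differentiableAt_fun_id]
    simp
  have hgdiff2 : ∀ x ∈ I, DifferentiableAt ℝ (deriv g) x := by
    intro x hx
    rw [(hIn x hx).differentiableAt_iff]
    exact (hf' x hx).sub ((differentiableAt_const m).mul differentiableAt_fun_id)
  -- g is convex on Icc a b
  have hconv : ConvexOn ℝ (Icc a b) g := by
    apply convexOn_of_deriv2_nonneg (convex_Icc a b)
    · exact fun x hx => (hgdiff x (hIcc hx)).continuousAt.continuousWithinAt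
    · intro x hx
      rw [interior_Icc] at hx
      exact (hgdiff x (hIcc (Ioo_subset_Icc_self hx))).differentiableWithinAt
    · intro x hx
      rw [interior_Icc] at hx
      exact (hgdiff2 x (hIcc (Ioo_subset_Icc_self hx))).differentiableWithinAt
    · intro x hx
      rw [interior_Icc] at hx
      have hxI : x ∈ I := hIcc (Ioo_subset_Icc_self hx)
      have : deriv^[2] g x = deriv (deriv g) x := by simp [Function.iterate_succ]
      rw [this, hderiv2g x hxI]
      have := hm x (Ioo_subset_Icc_self hx)
      linarith
  -- tangent line at c lies below g on Icc a b
  have htangent : ∀ x ∈ Icc a b, g c + deriv g c * (x - c) ≤ g x := by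
    intro x hx
    rcases lt_trichotomy x c with h | h | h
    · have := hconv.slope_le_deriv hx hcmem h (hgdiff c hcI)
      rw [slope_def_field] at this
      rw [div_le_iff₀ (by linarith : (0:ℝ) < c - x)] at this
      nlinarith [this]
    · simp [h]
    · have := hconv.deriv_le_slope hcmem hx h (hgdiff c hcI)
      rw [slope_def_field] at this
      rw [le_div_iff₀ (by linarith : (0:ℝ) < x - c)] at this
      nlinarith [this]
  -- thus f x ≥ (g c - deriv g c * c) + deriv g c * x + m/2 * x^2 on Icc a b
  set K0 : ℝ := g c - deriv g c * c with hK0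
  set K1 : ℝ := deriv g c with hK1
  have hgc : g c = f c - m / 2 * c ^ 2 := rfl
  have hpt : ∀ x ∈ Icc a b, K0 + K1 * x + m / 2 * x ^ 2 ≤ f x := by
    intro x hx
    have h1 := htangent x hx
    have hgx : g x = f x - m / 2 * x ^ 2 := rfl
    rw [hgc, hgx] at h1
    rw [hK0, hgc]
    linarith
  -- integrability
  have hfc : ContinuousOn f (Icc a b) := fun x hx =>
    (hf x (hIcc hx)).continuousAt.continuousWithinAt
  have hfint : IntervalIntegrable f MeasureTheory.volume a b := by
    apply ContinuousOn.intervalIntegrable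
    rwa [uIcc_of_le hab.le]
  have hpint : IntervalIntegrable (fun x => K0 + K1 * x + m / 2 * x ^ 2)
      MeasureTheory.volume a b := by
    apply Continuous.intervalIntegrable
    exact (continuous_const.add (continuous_const.mul continuous_id)).add
      (continuous_const.mul (continuous_pow 2))
  -- compare integrals
  have hint_le : (∫ x in a..b, (K0 + K1 * x + m / 2 * x ^ 2)) ≤ ∫ x in a..b, f x := by
    apply intervalIntegral.integral_mono_on hab.le hpint hfint hpt
  -- compute the polynomial integral
  have hcalc : (∫ x in a..b, (K0 + K1 * x + m / 2 * x ^ 2))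
      = K0 * (b - a) + K1 * (b ^ 2 - a ^ 2) / 2 + m / 2 * ((b ^ 3 - a ^ 3) / 3) := by
    have h1 : IntervalIntegrable (fun _ : ℝ => K0) MeasureTheory.volume a b :=
      intervalIntegrable_const
    have h2 : IntervalIntegrable (fun x : ℝ => K1 * x) MeasureTheory.volume a b := by
      apply Continuous.intervalIntegrable; exact continuous_const.mul continuous_id
    have h3 : IntervalIntegrable (fun x : ℝ => m / 2 * x ^ 2) MeasureTheory.volume a b := by
      apply Continuous.intervalIntegrable; exact continuous_const.mul (continuous_pow 2)
    rw [intervalIntegral.integral_add (h1.add h2) h3, intervalIntegral.integral_add h1 h2]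
    rw [intervalIntegral.integral_const]
    rw [intervalIntegral.integral_const_mul, intervalIntegral.integral_const_mul]
    rw [integral_id, integral_pow]
    simp only [smul_eq_mul]
    push_cast
    ring
  -- final arithmetic
  have hba : (0:ℝ) < b - a := by linarith
  have heq : K0 * (b - a) + K1 * (b ^ 2 - a ^ 2) / 2 + m / 2 * ((b ^ 3 - a ^ 3) / 3)
      = (b - a) * (f c + m / 24 * (b - a) ^ 2) := by
    rw [hK0, hK1, hgc, hc_def]
    ring
  have key : (b - a) * (f c + m / 24 * (b - a) ^ 2) ≤ ∫ x in a..b, f x := by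
    rw [hcalc, heq] at hint_le
    exact hint_le
  rw [one_div, ← div_eq_inv_mul, le_div_iff₀ hba]
  linarith [key]
end

section
/- Let I ⊆ ℝ be an open interval, a, b ∈ I with a < b, and let f : ℝ → ℝ be twice differentiable on I. If m is a real number with m ≤ f''(x) for all x ∈ [a, b], then (1/(b − a)) · ∫_a^b f(x) dx ≤ (f(a) + f(b))/2 − (m/12)·(b − a)². -/
/-- Let `I ⊆ ℝ` be an open interval, `a, b ∈ I` with `a < b`, and let `f : ℝ → ℝ` be twice
differentiable on `I`. If `m ≤ f''(x)` for all `x ∈ [a, b]`, then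
`(1/(b-a)) ∫_a^b f ≤ (f(a)+f(b))/2 - (m/12)(b-a)²`. -/
theorem hermite_hadamard_upper_trapezoid
    (I : Set ℝ) (hIopen : IsOpen I) (hIinterval : I.OrdConnected)
    (a b : ℝ) (ha : a ∈ I) (hb : b ∈ I) (hab : a < b)
    (f : ℝ → ℝ)
    (hf : ∀ x ∈ I, DifferentiableAt ℝ f x)
    (hf' : ∀ x ∈ I, DifferentiableAt ℝ (deriv f) x)
    (m : ℝ) (hm : ∀ x ∈ Set.Icc a b, m ≤ deriv (deriv f) x) :
    (1 / (b - a)) * ∫ x in a..b, f x ≤ (f a + f b) / 2 - m / 12 * (b - a) ^ 2 := by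
  have hba : (0:ℝ) < b - a := by linarith
  have hsub : Set.Icc a b ⊆ I := hIinterval.out ha hb
  set g : ℝ → ℝ := fun x => f x - m / 2 * x ^ 2 with hgdef
  -- derivative of g on I
  have hgd : ∀ x ∈ I, HasDerivAt g (deriv f x - m * x) x := by
    intro x hx
    have h1 : HasDerivAt (fun x : ℝ => m / 2 * x ^ 2) (m * x) x := by
      have := (hasDerivAt_pow 2 x).const_mul (m / 2)
      simpa using this.congr_deriv (by ring)
    exact ((hf x hx).hasDerivAt).sub h1
  have hgd' : ∀ x ∈ I, deriv g x = deriv f x - m * x := fun x hx => (hgd x hx).deriv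
  have hgdiff : ∀ x ∈ I, DifferentiableAt ℝ g x := fun x hx => (hgd x hx).differentiableAt
  have hIoo : Set.Ioo a b ⊆ I := fun x hx => hsub (Set.Ioo_subset_Icc_self hx)
  -- second derivative of g on Ioo
  have hg2 : ∀ x ∈ Set.Ioo a b, deriv (deriv g) x = deriv (deriv f) x - m := by
    intro x hx
    have hev : deriv g =ᶠ[nhds x] fun y => deriv f y - m * y :=
      Filter.eventually_of_mem (hIopen.mem_nhds (hIoo hx)) hgd'
    rw [hev.deriv_eq]
    have h2 : HasDerivAt (fun y => deriv f y - m * y) (deriv (deriv f) x - m) x := by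
      exact ((hf' x (hIoo hx)).hasDerivAt.sub ((hasDerivAt_id x).const_mul m)).congr_deriv (by ring)
    exact h2.deriv
  have hg2diff : ∀ x ∈ Set.Ioo a b, DifferentiableAt ℝ (deriv g) x := by
    intro x hx
    have hev : deriv g =ᶠ[nhds x] (fun y => deriv f y - m * y) :=
      Filter.eventually_of_mem (hIopen.mem_nhds (hIoo hx)) hgd'
    have hdm : DifferentiableAt ℝ (fun y : ℝ => m * y) x :=
      (differentiable_id.const_mul m).differentiableAt
    exact ((hf' x (hIoo hx)).sub hdm).congr_of_eventuallyEq hev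
  -- convexity of g on Icc a b
  have hgc : ConvexOn ℝ (Set.Icc a b) g := by
    apply convexOn_of_deriv2_nonneg (convex_Icc a b)
    · exact fun x hx => (hgdiff x (hsub hx)).continuousAt.continuousWithinAt
    · rw [interior_Icc]
      exact fun x hx => (hgdiff x (hIoo hx)).differentiableWithinAt
    · rw [interior_Icc]
      exact fun x hx => (hg2diff x hx).differentiableWithinAt
    · rw [interior_Icc]
      intro x hx
      have := hm x (Set.Ioo_subset_Icc_self hx)
      simp only [Function.iterate_succ, Function.iterate_zero, Function.comp_apply, id]
      rw [hg2 x hx]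
      linarith
  -- pointwise bound by the chord
  have hchord : ∀ x ∈ Set.Icc a b, g x ≤ ((b - x) * g a + (x - a) * g b) / (b - a) := by
    intro x hx
    have hp : (0:ℝ) ≤ (b - x) / (b - a) := div_nonneg (by linarith [hx.2]) hba.le
    have hq : (0:ℝ) ≤ (x - a) / (b - a) := div_nonneg (by linarith [hx.1]) hba.le
    have hpq : (b - x) / (b - a) + (x - a) / (b - a) = 1 := by
      field_simp
      ring
    have := hgc.2 (Set.left_mem_Icc.2 hab.le) (Set.right_mem_Icc.2 hab.le) hp hq hpq
    have hx' : ((b - x) / (b - a)) • a + ((x - a) / (b - a)) • b = x := by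
      rw [smul_eq_mul, smul_eq_mul]
      field_simp
      ring
    rw [hx', smul_eq_mul, smul_eq_mul] at this
    calc g x ≤ (b - x) / (b - a) * g a + (x - a) / (b - a) * g b := this
      _ = ((b - x) * g a + (x - a) * g b) / (b - a) := by ring
  -- integrability
  have hfc : ContinuousOn f (Set.uIcc a b) := by
    rw [Set.uIcc_of_le hab.le]
    exact fun x hx => (hf x (hsub hx)).continuousAt.continuousWithinAt
  have hfint : IntervalIntegrable f MeasureTheory.volume a b := hfc.intervalIntegrable
  have hgc' : ContinuousOn g (Set.uIcc a b) := by
    rw [Set.uIcc_of_le hab.le]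
    exact fun x hx => (hgdiff x (hsub hx)).continuousAt.continuousWithinAt
  have hgint : IntervalIntegrable g MeasureTheory.volume a b := hgc'.intervalIntegrable
  have hlin : IntervalIntegrable (fun x => ((b - x) * g a + (x - a) * g b) / (b - a))
      MeasureTheory.volume a b := by
    apply Continuous.intervalIntegrable
    fun_prop
  -- Hermite–Hadamard upper bound for g
  have hHH : (∫ x in a..b, g x) ≤ (b - a) * (g a + g b) / 2 := by
    have h1 : (∫ x in a..b, g x) ≤ ∫ x in a..b, ((b - x) * g a + (x - a) * g b) / (b - a) :=
      intervalIntegral.integral_mono_on hab.le hgint hlin (by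
        intro x hx; exact hchord x hx)
    have h2 : (∫ x in a..b, ((b - x) * g a + (x - a) * g b) / (b - a))
        = (b - a) * (g a + g b) / 2 := by
      have heq : ∀ x : ℝ, ((b - x) * g a + (x - a) * g b) / (b - a)
          = (b * g a - a * g b) / (b - a) + ((g b - g a) / (b - a)) * x := by
        intro x; field_simp; ring
      simp_rw [heq]
      have hc : IntervalIntegrable (fun x : ℝ => (g b - g a) / (b - a) * x)
          MeasureTheory.volume a b := by
        apply Continuous.intervalIntegrable; fun_prop
      rw [intervalIntegral.integral_add (intervalIntegrable_const) hc,
        intervalIntegral.integral_const_mul, integral_id, intervalIntegral.integral_const]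
      simp only [smul_eq_mul]
      field_simp
      ring
    linarith
  -- relate integral of f and g
  have hsq : IntervalIntegrable (fun x : ℝ => m / 2 * x ^ 2) MeasureTheory.volume a b := by
    apply Continuous.intervalIntegrable; fun_prop
  have hfg : (∫ x in a..b, g x) = (∫ x in a..b, f x) - m / 2 * ((b ^ 3 - a ^ 3) / 3) := by
    rw [hgdef]
    rw [intervalIntegral.integral_sub hfint hsq, intervalIntegral.integral_const_mul,
      integral_pow]
    norm_num
  -- combine
  rw [one_div, inv_mul_eq_div, div_le_iff₀ hba]
  have hga : g a = f a - m / 2 * a ^ 2 := rfl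
  have hgb : g b = f b - m / 2 * b ^ 2 := rfl
  nlinarith [hHH, hfg]
end

section
/- Let I ⊆ ℝ be an open interval, a, b ∈ I with a < b, and let f : ℝ → ℝ be twice differentiable on I. If M is a real number with f''(x) ≤ M for all x ∈ [a, b], then (1/(b − a)) · ∫_a^b f(x) dx ≤ f((a + b)/2) + (M/24)·(b − a)². -/
/-- Let `I ⊆ ℝ` be an open interval, `a, b ∈ I` with `a < b`, and let `f : ℝ → ℝ` be twice
differentiable on `I`. If `f''(x) ≤ M` for all `x ∈ [a, b]`, then
`(1/(b-a)) ∫_a^b f ≤ f((a+b)/2) + (M/24)(b-a)²`. -/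
theorem hermite_hadamard_upper_midpoint
    (I : Set ℝ) (hIopen : IsOpen I) (hIinterval : I.OrdConnected)
    (a b : ℝ) (ha : a ∈ I) (hb : b ∈ I) (hab : a < b)
    (f : ℝ → ℝ)
    (hf : ∀ x ∈ I, DifferentiableAt ℝ f x)
    (hf' : ∀ x ∈ I, DifferentiableAt ℝ (deriv f) x)
    (M : ℝ) (hM : ∀ x ∈ Set.Icc a b, deriv (deriv f) x ≤ M) :
    (1 / (b - a)) * ∫ x in a..b, f x ≤ f ((a + b) / 2) + M / 24 * (b - a) ^ 2 := by
  have hIcc : Set.Icc a b ⊆ I := hIinterval.out ha hb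
  set g : ℝ → ℝ := fun x => f x - M / 2 * x ^ 2 with hg_def
  -- g is concave on Icc a b
  have hgdiff : ∀ x ∈ I, DifferentiableAt ℝ g x := fun x hx =>
    (hf x hx).sub (differentiableAt_fun_id.pow 2 |>.const_mul _)
  have hderiv_g : ∀ x ∈ I, deriv g x = deriv f x - M * x := by
    intro x hx
    have h1 : HasDerivAt g (deriv f x - M * x) x := by
      have := ((hf x hx).hasDerivAt).sub
        (((hasDerivAt_pow 2 x).const_mul (M/2)))
      exact this.congr_deriv (by simp only [Nat.cast_ofNat, pow_one, Nat.add_one_sub_one]; ring)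
    exact h1.deriv
  have hderiv2_g : ∀ x ∈ I, deriv (deriv g) x = deriv (deriv f) x - M := by
    intro x hx
    have hev : deriv g =ᶠ[nhds x] (fun y => deriv f y - M * y) := by
      filter_upwards [hIopen.mem_nhds hx] with y hy using hderiv_g y hy
    rw [Filter.EventuallyEq.deriv_eq hev]
    have h1 : HasDerivAt (fun y => deriv f y - M * y) (deriv (deriv f) x - M) x := by
      have := ((hf' x hx).hasDerivAt).sub ((hasDerivAt_id x).const_mul M)
      exact this.congr_deriv (by simp)
    exact h1.deriv
  have hconc : ConcaveOn ℝ (Set.Icc a b) g := by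
    apply concaveOn_of_deriv2_nonpos (convex_Icc a b)
    · exact fun x hx => (hgdiff x (hIcc hx)).continuousAt.continuousWithinAt
    · intro x hx
      rw [interior_Icc] at hx
      exact (hgdiff x (hIcc (Set.Ioo_subset_Icc_self hx))).differentiableWithinAt
    · intro x hx
      rw [interior_Icc] at hx
      exact ((hf' x (hIcc (Set.Ioo_subset_Icc_self hx))).sub
        ((differentiableAt_fun_id).const_mul M)).congr_of_eventuallyEq
        (by filter_upwards [hIopen.mem_nhds (hIcc (Set.Ioo_subset_Icc_self hx))] with y hy
            using (hderiv_g y hy)) |>.differentiableWithinAt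
    · intro x hx
      rw [interior_Icc] at hx
      have hxI : x ∈ I := hIcc (Set.Ioo_subset_Icc_self hx)
      have : deriv^[2] g x = deriv (deriv g) x := by simp [Function.iterate_succ]
      rw [this, hderiv2_g x hxI]
      have := hM x (Set.Ioo_subset_Icc_self hx)
      linarith
  -- Jensen
  have h0 : (MeasureTheory.volume (Set.Icc a b)) ≠ 0 := by
    simp [Real.volume_Icc]; exact hab
  have hT : (MeasureTheory.volume (Set.Icc a b)) ≠ ⊤ := by
    simp [Real.volume_Icc]
  have hgc : ContinuousOn g (Set.Icc a b) :=
    fun x hx => (hgdiff x (hIcc hx)).continuousAt.continuousWithinAt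
  have hfi : MeasureTheory.IntegrableOn (fun x : ℝ => x) (Set.Icc a b) :=
    Continuous.integrableOn_Icc continuous_id
  have hgi : MeasureTheory.IntegrableOn (g ∘ fun x : ℝ => x) (Set.Icc a b) :=
    hgc.integrableOn_compact isCompact_Icc
  have hjensen := hconc.le_map_set_average hgc isClosed_Icc h0 hT
    ((MeasureTheory.ae_restrict_mem measurableSet_Icc).mono (fun x hx => hx)) hfi hgi
  have hne : b - a ≠ 0 := sub_ne_zero.2 hab.ne'
  have hvol : MeasureTheory.volume.real (Set.Icc a b) = b - a := by
    rw [MeasureTheory.measureReal_def, Real.volume_Icc, ENNReal.toReal_ofReal (by linarith)]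
  have hfInt : IntervalIntegrable f MeasureTheory.volume a b :=
    ContinuousOn.intervalIntegrable (by
      rw [Set.uIcc_of_le hab.le]
      exact fun x hx => (hf x (hIcc hx)).continuousAt.continuousWithinAt)
  have hx2Int : IntervalIntegrable (fun x : ℝ => M / 2 * x ^ 2) MeasureTheory.volume a b :=
    (Continuous.intervalIntegrable (by continuity) a b)
  have havg_id : (⨍ x in Set.Icc a b, x) = (a + b) / 2 := by
    rw [MeasureTheory.setAverage_eq, hvol, MeasureTheory.integral_Icc_eq_integral_Ioc,
      ← intervalIntegral.integral_of_le hab.le, integral_id]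
    simp only [smul_eq_mul]
    field_simp
    ring
  have hint_g : ∫ x in Set.Icc a b, g x = (∫ x in a..b, f x) - M / 2 * ((b ^ 3 - a ^ 3) / 3) := by
    rw [MeasureTheory.integral_Icc_eq_integral_Ioc, ← intervalIntegral.integral_of_le hab.le,
      hg_def, intervalIntegral.integral_sub hfInt hx2Int, intervalIntegral.integral_const_mul,
      integral_pow]
    norm_num
  have h2 : (b - a)⁻¹ * ((∫ x in a..b, f x) - M / 2 * ((b ^ 3 - a ^ 3) / 3)) ≤
      f ((a + b) / 2) - M / 2 * ((a + b) / 2) ^ 2 := by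
    have h := hjensen
    rw [havg_id, MeasureTheory.setAverage_eq, hvol] at h
    rw [hint_g] at h
    simpa [hg_def, smul_eq_mul] using h
  have hexp : (b - a)⁻¹ * ((∫ x in a..b, f x) - M / 2 * ((b ^ 3 - a ^ 3) / 3)) =
      (b - a)⁻¹ * (∫ x in a..b, f x) - M / 6 * (a ^ 2 + a * b + b ^ 2) := by
    field_simp
    ring
  have hfinal : f ((a + b) / 2) - M / 2 * ((a + b) / 2) ^ 2 + M / 6 * (a ^ 2 + a * b + b ^ 2) =
      f ((a + b) / 2) + M / 24 * (b - a) ^ 2 := by ring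
  rw [one_div]
  linarith [hexp ▸ h2]
end

section
/- Let I ⊆ ℝ be an open interval, a, b ∈ I with a < b, and let f : ℝ → ℝ be twice differentiable on I with f''(x) ≤ 0 for all x ∈ [a, b] (i.e., f is concave on [a, b]). Then (f(a) + f(b))/2 ≤ (1/(b − a)) · ∫_a^b f(x) dx ≤ f((a + b)/2). -/
open MeasureTheory intervalIntegral Set

/-- Let `I ⊆ ℝ` be an open interval, `a, b ∈ I` with `a < b`, and let `f : ℝ → ℝ` be twice
differentiable on `I` with `f'' ≤ 0` on `[a, b]` (i.e. `f` concave there). Then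
`(f(a)+f(b))/2 ≤ (1/(b-a)) ∫_a^b f ≤ f((a+b)/2)`. -/
theorem hermite_hadamard_concave
    (I : Set ℝ) (hIopen : IsOpen I) (hIinterval : I.OrdConnected)
    (a b : ℝ) (ha : a ∈ I) (hb : b ∈ I) (hab : a < b)
    (f : ℝ → ℝ)
    (hf : ∀ x ∈ I, DifferentiableAt ℝ f x)
    (hf' : ∀ x ∈ I, DifferentiableAt ℝ (deriv f) x)
    (hconc : ∀ x ∈ Set.Icc a b, deriv (deriv f) x ≤ 0) :
    (f a + f b) / 2 ≤ (1 / (b - a)) * ∫ x in a..b, f x ∧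
      (1 / (b - a)) * ∫ x in a..b, f x ≤ f ((a + b) / 2) := by
  have hIccI : Set.Icc a b ⊆ I := hIinterval.out ha hb
  have hba : (0:ℝ) < b - a := by linarith
  have hcont : ContinuousOn f (Set.Icc a b) := fun x hx =>
    ((hf x (hIccI hx)).continuousAt).continuousWithinAt
  have hconcave : ConcaveOn ℝ (Set.Icc a b) f := by
    apply concaveOn_of_deriv2_nonpos (convex_Icc a b) hcont
    · intro x hx
      exact (hf x (hIccI (interior_subset hx))).differentiableWithinAt
    · intro x hx
      exact (hf' x (hIccI (interior_subset hx))).differentiableWithinAt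
    · intro x hx
      simpa [Function.iterate_succ, Function.comp] using hconc x (interior_subset hx)
  have hfi : IntervalIntegrable f volume a b :=
    hcont.intervalIntegrable_of_Icc hab.le
  constructor
  · -- left inequality
    have hline : ∀ x ∈ Set.Icc a b,
        ((b - x) * f a + (x - a) * f b) / (b - a) ≤ f x := by
      intro x hx
      have h1 : (0:ℝ) ≤ (b - x) / (b - a) := by
        apply div_nonneg _ hba.le; linarith [hx.2]
      have h2 : (0:ℝ) ≤ (x - a) / (b - a) := by
        apply div_nonneg _ hba.le; linarith [hx.1]
      have h3 : (b - x) / (b - a) + (x - a) / (b - a) = 1 := by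
        field_simp
        ring
      have := hconcave.2 (Set.left_mem_Icc.2 hab.le) (Set.right_mem_Icc.2 hab.le) h1 h2 h3
      have hxeq : ((b - x) / (b - a)) • a + ((x - a) / (b - a)) • b = x := by
        rw [smul_eq_mul, smul_eq_mul]; field_simp; ring
      rw [hxeq] at this
      calc ((b - x) * f a + (x - a) * f b) / (b - a)
          = ((b - x) / (b - a)) • f a + ((x - a) / (b - a)) • f b := by
            simp [smul_eq_mul]; ring
        _ ≤ f x := this
    have hLi : IntervalIntegrable (fun x => ((b - x) * f a + (x - a) * f b) / (b - a))
        volume a b := by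
      apply Continuous.intervalIntegrable; continuity
    have hmono := intervalIntegral.integral_mono_on hab.le hLi hfi hline
    have hLval : (∫ x in a..b, ((b - x) * f a + (x - a) * f b) / (b - a))
        = (f a + f b) * (b - a) / 2 := by
      have : ∀ x : ℝ, ((b - x) * f a + (x - a) * f b) / (b - a)
          = (f b - f a)/(b - a) * x + (b * f a - a * f b)/(b - a) := by
        intro x; field_simp; ring
      simp_rw [this]
      rw [intervalIntegral.integral_add (by apply Continuous.intervalIntegrable; continuity)
        (intervalIntegrable_const), intervalIntegral.integral_const_mul, integral_id,
        intervalIntegral.integral_const]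
      rw [smul_eq_mul]
      field_simp
      ring
    rw [hLval] at hmono
    rw [one_div, ← div_eq_inv_mul, le_div_iff₀ hba]
    calc (f a + f b) / 2 * (b - a) = (f a + f b) * (b - a) / 2 := by ring
      _ ≤ _ := hmono
  · -- right inequality: Jensen
    have h0 : volume (Set.Icc a b) ≠ 0 := by
      simp [Real.volume_Icc]; linarith
    have ht : volume (Set.Icc a b) ≠ ⊤ := by simp [Real.volume_Icc]
    have hfs : ∀ᵐ x ∂(volume.restrict (Set.Icc a b)), id x ∈ Set.Icc a b := by
      filter_upwards [ae_restrict_mem measurableSet_Icc] with x hx using hx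
    have hidi : IntegrableOn (id : ℝ → ℝ) (Set.Icc a b) volume :=
      continuous_id.continuousOn.integrableOn_Icc
    have hgi : IntegrableOn (f ∘ id) (Set.Icc a b) volume := hcont.integrableOn_Icc
    have hJ := hconcave.le_map_set_average hcont isClosed_Icc h0 ht hfs hidi hgi
    have havg_id : (⨍ x in Set.Icc a b, x) = (a + b) / 2 := by
      rw [setAverage_eq, Real.volume_real_Icc_of_le hab.le, MeasureTheory.integral_Icc_eq_integral_Ioc,
        ← intervalIntegral.integral_of_le hab.le, integral_id,
        smul_eq_mul]
      field_simp; ring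
    have havg_f : (⨍ x in Set.Icc a b, f x) = (1 / (b - a)) * ∫ x in a..b, f x := by
      rw [setAverage_eq, Real.volume_real_Icc_of_le hab.le, MeasureTheory.integral_Icc_eq_integral_Ioc,
        ← intervalIntegral.integral_of_le hab.le,
        smul_eq_mul, one_div]
    simp only [id_eq] at hJ
    rw [havg_id, havg_f] at hJ
    exact hJ
end

section
/- Let a < b be real numbers and let f : ℝ → ℝ be continuously differentiable on an open interval I containing [a, b]. Then ((b − a)/2)·(f(a) + f(b)) − ∫_a^b f(x) dx = ∫_0^{(b−a)/2} ((b − a)/2 − t)·( f'(b − t) − f'(a + t) ) dt. -/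
/-- Trapezoid-rule identity: if `f` is continuously differentiable on an open interval `I`
containing `[a, b]` with `a < b`, then
`((b-a)/2)(f(a)+f(b)) - ∫_a^b f = ∫_0^{(b-a)/2} ((b-a)/2 - t)(f'(b - t) - f'(a + t)) dt`. -/
theorem trapezoid_integral_identity
    (I : Set ℝ) (hIopen : IsOpen I) (hIinterval : I.OrdConnected)
    (a b : ℝ) (hab : a < b) (hsub : Set.Icc a b ⊆ I)
    (f : ℝ → ℝ) (hf : ContDiffOn ℝ 1 f I) :
    ((b - a) / 2) * (f a + f b) - (∫ x in a..b, f x) =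
      ∫ t in (0 : ℝ)..((b - a) / 2),
        ((b - a) / 2 - t) * (deriv f (b - t) - deriv f (a + t)) := by
  set c : ℝ := (b - a) / 2 with hc
  have hcpos : 0 < c := by rw [hc]; linarith
  have hfc : ContinuousOn f I := hf.continuousOn
  have hf'c : ContinuousOn (deriv f) I := hf.continuousOn_deriv_of_isOpen hIopen le_rfl
  have hmemA : ∀ t ∈ Set.Icc (0:ℝ) c, a + t ∈ Set.Icc a b := by
    intro t ht
    have h1 := ht.1; have h2 := ht.2
    constructor <;> [linarith; (rw [hc] at h2; linarith)]
  have hmemB : ∀ t ∈ Set.Icc (0:ℝ) c, b - t ∈ Set.Icc a b := by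
    intro t ht
    have h1 := ht.1; have h2 := ht.2
    constructor <;> [(rw [hc] at h2; linarith); linarith]
  -- f has derivative at points of I
  have hfd : ∀ x ∈ Set.Icc a b, HasDerivAt f (deriv f x) x := by
    intro x hx
    exact (((hf.differentiableOn one_ne_zero) x (hsub hx)).differentiableAt
      (hIopen.mem_nhds (hsub hx))).hasDerivAt
  -- F x = ∫_a^x f
  set F : ℝ → ℝ := fun x => ∫ s in a..x, f s with hF
  have hfint : ∀ x ∈ Set.Icc a b, IntervalIntegrable f MeasureTheory.volume a x := by
    intro x hx
    apply ContinuousOn.intervalIntegrable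
    apply (hfc.mono hsub).mono
    exact Set.uIcc_subset_Icc ⟨le_rfl, hab.le⟩ hx
  have hFd : ∀ x ∈ Set.Icc a b, HasDerivAt F (f x) x := by
    intro x hx
    exact intervalIntegral.integral_hasDerivAt_right (hfint x hx)
      (ContinuousOn.stronglyMeasurableAtFilter hIopen hfc x (hsub hx))
      (hfc.continuousAt (hIopen.mem_nhds (hsub hx)))
  -- φ
  set φ : ℝ → ℝ := fun t => (c - t) * (f (a + t) + f (b - t)) - (F (b - t) - F (a + t))
    with hφ
  have hφd : ∀ t ∈ Set.uIcc (0:ℝ) c,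
      HasDerivAt φ (-((c - t) * (deriv f (b - t) - deriv f (a + t)))) t := by
    intro t ht
    rw [Set.uIcc_of_le hcpos.le] at ht
    have hA := hmemA t ht
    have hB := hmemB t ht
    have hat : HasDerivAt (fun t : ℝ => a + t) 1 t := by
      simpa using (hasDerivAt_id t).const_add a
    have hbt : HasDerivAt (fun t : ℝ => b - t) (-1) t := by
      simpa using (hasDerivAt_id t).const_sub b
    have h1 : HasDerivAt (fun t : ℝ => f (a + t)) (deriv f (a + t) * 1) t :=
      (hfd _ hA).comp t hat
    have h2 : HasDerivAt (fun t : ℝ => f (b - t)) (deriv f (b - t) * (-1)) t :=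
      (hfd _ hB).comp t hbt
    have h3 : HasDerivAt (fun t : ℝ => F (a + t)) (f (a + t) * 1) t :=
      (hFd _ hA).comp t hat
    have h4 : HasDerivAt (fun t : ℝ => F (b - t)) (f (b - t) * (-1)) t :=
      (hFd _ hB).comp t hbt
    have h5 : HasDerivAt (fun t : ℝ => c - t) (-1) t := by
      simpa using (hasDerivAt_id t).const_sub c
    have := (h5.mul (h1.add h2)).sub (h4.sub h3)
    refine this.congr_deriv ?_
    simp only [Pi.add_apply]
    ring
  have hintφ' : IntervalIntegrable
      (fun t => -((c - t) * (deriv f (b - t) - deriv f (a + t))))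
      MeasureTheory.volume 0 c := by
    apply ContinuousOn.intervalIntegrable
    rw [Set.uIcc_of_le hcpos.le]
    apply ContinuousOn.neg
    apply ContinuousOn.mul
    · exact (continuousOn_const.sub continuousOn_id)
    · apply ContinuousOn.sub
      · exact (hf'c.mono hsub).comp (continuousOn_const.sub continuousOn_id) hmemB
      · exact (hf'c.mono hsub).comp (continuousOn_const.add continuousOn_id) hmemA
  have hFTC := intervalIntegral.integral_eq_sub_of_hasDerivAt hφd hintφ'
  have hbc : b - c = a + c := by rw [hc]; ring
  have hφc : φ c = 0 := by simp [hφ, hbc]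
  have hφ0 : φ 0 = c * (f a + f b) - ∫ x in a..b, f x := by
    simp [hφ, hF, intervalIntegral.integral_same]
  rw [hφc, hφ0, intervalIntegral.integral_neg] at hFTC
  linarith [hFTC]
end
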